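/- arXiv:2004.02188 — 7 statements merged into one kernel-verified Lean document; each statement's English description precedes it below -/
import Mathlib

section
/- Let F : ℝⁿ ⇉ ℝᵐ be a set-valued map with closed graph. If F is an open map from its domain into its range (i.e., the image under F of every open subset of dom F is open in range F with its subspace topology), then the function (x, y) ↦ dist(x, F⁻¹(y)), defined on ℝⁿ × range F, is continuous. -/
/-- If a closed-graph set-valued map `F : ℝⁿ ⇉ ℝᵐ` is an open map from its
domain into its range, then `(x, y) ↦ dist(x, F⁻¹(y))` is continuous on `ℝⁿ × range F`. -/
theorem stmt0 {n m : ℕ}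
    (F : EuclideanSpace ℝ (Fin n) → Set (EuclideanSpace ℝ (Fin m)))
    (hgraph : IsClosed {p : EuclideanSpace ℝ (Fin n) × EuclideanSpace ℝ (Fin m) | p.2 ∈ F p.1})
    (hopen : ∀ U : Set (EuclideanSpace ℝ (Fin n)), IsOpen U →
      ∃ W : Set (EuclideanSpace ℝ (Fin m)), IsOpen W ∧
        (⋃ x ∈ U ∩ {x | (F x).Nonempty}, F x) = W ∩ ⋃ x, F x) :
    ContinuousOn
      (fun p : EuclideanSpace ℝ (Fin n) × EuclideanSpace ℝ (Fin m) =>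
        Metric.infDist p.1 {x | p.2 ∈ F x})
      (Set.univ ×ˢ ⋃ x, F x) := by
  set S : EuclideanSpace ℝ (Fin m) → Set (EuclideanSpace ℝ (Fin n)) :=
    fun y => {x | y ∈ F x} with hSdef
  have hSclosed : ∀ y, IsClosed (S y) := by
    intro y
    have : S y = (fun x => (x, y)) ⁻¹' {p : EuclideanSpace ℝ (Fin n) ×
        EuclideanSpace ℝ (Fin m) | p.2 ∈ F p.1} := rfl
    rw [this]
    exact hgraph.preimage (continuous_id.prodMk continuous_const)
  rintro ⟨x₀, y₀⟩ ⟨-, hy₀⟩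
  rw [Set.mem_iUnion] at hy₀
  obtain ⟨a₀, ha₀⟩ := hy₀
  have hSne : (S y₀).Nonempty := ⟨a₀, ha₀⟩
  set d₀ := Metric.infDist x₀ (S y₀) with hd₀
  rw [Metric.continuousWithinAt_iff]
  intro ε hε
  -- Upper semicontinuity in y, using openness
  obtain ⟨x₁, hx₁S, hx₁d⟩ : ∃ x₁ ∈ S y₀, dist x₀ x₁ < d₀ + ε / 6 := by
    rw [← Metric.infDist_lt_iff hSne]
    linarith
  obtain ⟨W, hWopen, hWeq⟩ := hopen (Metric.ball x₁ (ε / 6)) Metric.isOpen_ball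
  have hy₀W : y₀ ∈ W := by
    have : y₀ ∈ ⋃ x ∈ Metric.ball x₁ (ε / 6) ∩ {x | (F x).Nonempty}, F x := by
      refine Set.mem_biUnion ⟨Metric.mem_ball_self (by linarith), ⟨y₀, hx₁S⟩⟩ hx₁S
    rw [hWeq] at this
    exact this.1
  obtain ⟨δ₁, hδ₁, hball₁⟩ := Metric.isOpen_iff.1 hWopen y₀ hy₀W
  have Pup : ∀ y, y ∈ (⋃ x, F x) → dist y y₀ < δ₁ →
      Metric.infDist x₀ (S y) < d₀ + ε / 3 := by
    intro y hy hdy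
    have hyW : y ∈ W ∩ ⋃ x, F x := ⟨hball₁ (Metric.mem_ball.2 hdy), hy⟩
    rw [← hWeq] at hyW
    obtain ⟨x, hx, hyx⟩ := Set.mem_iUnion₂.1 hyW
    have h1 : Metric.infDist x₀ (S y) ≤ dist x₀ x :=
      Metric.infDist_le_dist_of_mem hyx
    have h2 : dist x₀ x ≤ dist x₀ x₁ + dist x₁ x := dist_triangle _ _ _
    have h3 : dist x₁ x < ε / 6 := by
      have := Metric.mem_ball.1 hx.1; rwa [dist_comm]
    linarith
  -- Lower semicontinuity in y, using closed graph and compactness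
  have Plow : ∃ δ₂ > 0, ∀ y, y ∈ (⋃ x, F x) → dist y y₀ < δ₂ →
      d₀ - ε / 3 < Metric.infDist x₀ (S y) := by
    by_contra h
    push_neg at h
    have hseq : ∀ k : ℕ, ∃ y, y ∈ (⋃ x, F x) ∧ dist y y₀ < 1 / (k + 1) ∧
        Metric.infDist x₀ (S y) ≤ d₀ - ε / 3 := by
      intro k
      obtain ⟨y, hy1, hy2, hy3⟩ := h (1 / (k + 1)) (by positivity)
      exact ⟨y, hy1, hy2, hy3⟩
    choose ys hys1 hys2 hys3 using hseq
    have hSyne : ∀ k, (S (ys k)).Nonempty := by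
      intro k
      obtain ⟨x, hx⟩ := Set.mem_iUnion.1 (hys1 k)
      exact ⟨x, hx⟩
    have hz : ∀ k, ∃ z ∈ S (ys k), Metric.infDist x₀ (S (ys k)) = dist x₀ z :=
      fun k => (hSclosed (ys k)).exists_infDist_eq_dist (hSyne k) x₀
    choose zs hzs1 hzs2 using hz
    have hzd : ∀ k, dist x₀ (zs k) ≤ d₀ - ε / 3 := by
      intro k; rw [← hzs2 k]; exact hys3 k
    have hzball : ∀ k, zs k ∈ Metric.closedBall x₀ d₀ := by
      intro k
      rw [Metric.mem_closedBall, dist_comm]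
      linarith [hzd k]
    obtain ⟨z, hzmem, φ, hφ, hzt⟩ :=
      (isCompact_closedBall x₀ d₀).tendsto_subseq hzball
    have hyt : Filter.Tendsto ys Filter.atTop (nhds y₀) := by
      rw [tendsto_iff_dist_tendsto_zero]
      refine squeeze_zero (fun k => dist_nonneg) (fun k => (hys2 k).le)
        tendsto_one_div_add_atTop_nhds_zero_nat
    have hpair : Filter.Tendsto (fun k => ((zs ∘ φ) k, ys (φ k))) Filter.atTop
        (nhds (z, y₀)) := hzt.prodMk_nhds (hyt.comp hφ.tendsto_atTop)
    have hzS : z ∈ S y₀ := by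
      have := hgraph.mem_of_tendsto hpair
        (Filter.Eventually.of_forall (fun k => hzs1 (φ k)))
      exact this
    have h1 : d₀ ≤ dist x₀ z := Metric.infDist_le_dist_of_mem hzS
    have h2 : dist x₀ z ≤ d₀ - ε / 3 := by
      refine le_of_tendsto (Filter.Tendsto.dist tendsto_const_nhds hzt)
        (Filter.Eventually.of_forall (fun k => hzd (φ k)))
    linarith
  obtain ⟨δ₂, hδ₂, Plow⟩ := Plow
  refine ⟨min (ε / 3) (min δ₁ δ₂), by positivity, ?_⟩
  rintro ⟨x, y⟩ ⟨-, hy⟩ hdist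
  have hdx : dist x x₀ < min (ε / 3) (min δ₁ δ₂) :=
    lt_of_le_of_lt (by rw [Prod.dist_eq]; exact le_max_left _ _) hdist
  have hdy : dist y y₀ < min (ε / 3) (min δ₁ δ₂) :=
    lt_of_le_of_lt (by rw [Prod.dist_eq]; exact le_max_right _ _) hdist
  have hdx' : dist x x₀ < ε / 3 := lt_of_lt_of_le hdx (min_le_left _ _)
  have hdy1 : dist y y₀ < δ₁ :=
    lt_of_lt_of_le hdy (le_trans (min_le_right _ _) (min_le_left _ _))
  have hdy2 : dist y y₀ < δ₂ :=
    lt_of_lt_of_le hdy (le_trans (min_le_right _ _) (min_le_right _ _))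
  have hup := Pup y hy hdy1
  have hlow := Plow y hy hdy2
  have hL1 : Metric.infDist x (S y) ≤ Metric.infDist x₀ (S y) + dist x x₀ :=
    Metric.infDist_le_infDist_add_dist
  have hL2 : Metric.infDist x₀ (S y) ≤ Metric.infDist x (S y) + dist x₀ x :=
    Metric.infDist_le_infDist_add_dist
  rw [dist_comm x₀ x] at hL2
  rw [Real.dist_eq, abs_sub_lt_iff]
  exact ⟨by linarith, by linarith⟩
end

section
/- Let F : ℝⁿ ⇉ ℝᵐ be a set-valued map with closed graph. If the function (x, y) ↦ dist(x, F⁻¹(y)) is continuous on ℝⁿ × range F, then F is an open map from its domain into its range, i.e., for every set U open in dom F, the set F(U) is open in range F. -/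
open Metric Set Filter

/-- If `(x, y) ↦ dist(x, F⁻¹(y))` is continuous on `ℝⁿ × range F`, then the
closed-graph set-valued map `F` is an open map from its domain into its range. -/
theorem stmt1 {n m : ℕ}
    (F : EuclideanSpace ℝ (Fin n) → Set (EuclideanSpace ℝ (Fin m)))
    (hgraph : IsClosed {p : EuclideanSpace ℝ (Fin n) × EuclideanSpace ℝ (Fin m) | p.2 ∈ F p.1})
    (hcont : ContinuousOn
      (fun p : EuclideanSpace ℝ (Fin n) × EuclideanSpace ℝ (Fin m) =>
        Metric.infDist p.1 {x | p.2 ∈ F x})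
      (Set.univ ×ˢ ⋃ x, F x)) :
    ∀ U : Set (EuclideanSpace ℝ (Fin n)), IsOpen U →
      ∃ W : Set (EuclideanSpace ℝ (Fin m)), IsOpen W ∧
        (⋃ x ∈ U ∩ {x | (F x).Nonempty}, F x) = W ∩ ⋃ x, F x := by
  intro U hU
  set R : Set (EuclideanSpace ℝ (Fin m)) := ⋃ x, F x with hR
  set S : Set (EuclideanSpace ℝ (Fin m)) :=
    ⋃ x ∈ U ∩ {x | (F x).Nonempty}, F x with hS
  have hSR : S ⊆ R := by
    intro z hz
    simp only [hS, mem_iUnion] at hz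
    obtain ⟨x, -, hzx⟩ := hz
    exact mem_iUnion.mpr ⟨x, hzx⟩
  have key : ∀ y ∈ S, ∃ δ > 0, ball y δ ∩ R ⊆ S := by
    intro y hy
    simp only [hS, mem_iUnion, mem_inter_iff] at hy
    obtain ⟨x, ⟨hxU, -⟩, hyFx⟩ := hy
    obtain ⟨ε, hε, hball⟩ := Metric.isOpen_iff.mp hU x hxU
    have hyR : y ∈ R := mem_iUnion.mpr ⟨x, hyFx⟩
    have hmem : ((x, y) : EuclideanSpace ℝ (Fin n) × EuclideanSpace ℝ (Fin m)) ∈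
        (Set.univ ×ˢ R) := ⟨trivial, hyR⟩
    have hc := hcont (x, y) hmem
    have hmaps : MapsTo (fun y' : EuclideanSpace ℝ (Fin m) => ((x, y') :
        EuclideanSpace ℝ (Fin n) × EuclideanSpace ℝ (Fin m))) R (Set.univ ×ˢ R) :=
      fun y' hy' => ⟨trivial, hy'⟩
    have hc2 : ContinuousWithinAt
        (fun y' : EuclideanSpace ℝ (Fin m) => Metric.infDist x {x' | y' ∈ F x'}) R y := by
      exact hc.comp ((Continuous.prodMk_right x).continuousWithinAt) hmaps
    have hzero : Metric.infDist x {x' | y ∈ F x'} = 0 :=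
      Metric.infDist_zero_of_mem hyFx
    have hev : ∀ᶠ y' in nhdsWithin y R,
        Metric.infDist x {x' | y' ∈ F x'} < ε := by
      have := hc2.tendsto
      rw [hzero] at this
      exact this.eventually_lt_const hε
    obtain ⟨δ, hδ, hδsub⟩ := Metric.mem_nhdsWithin_iff.mp hev
    refine ⟨δ, hδ, ?_⟩
    rintro y' ⟨hy'b, hy'R⟩
    have hlt : Metric.infDist x {x' | y' ∈ F x'} < ε := hδsub ⟨hy'b, hy'R⟩
    have hne : {x' | y' ∈ F x'}.Nonempty := by
      obtain ⟨x0, hx0⟩ := mem_iUnion.mp hy'R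
      exact ⟨x0, hx0⟩
    obtain ⟨x'', hx''mem, hx''d⟩ := (Metric.infDist_lt_iff hne).mp hlt
    have hx''U : x'' ∈ U := hball (by rwa [mem_ball, dist_comm])
    simp only [hS, mem_iUnion, mem_inter_iff]
    exact ⟨x'', ⟨hx''U, ⟨y', hx''mem⟩⟩, hx''mem⟩
  choose! δ hδpos hδ using key
  refine ⟨⋃ y ∈ S, ball y (δ y), isOpen_biUnion (fun y _ => isOpen_ball), ?_⟩
  apply Set.Subset.antisymm
  · intro z hz
    exact ⟨mem_biUnion hz (mem_ball_self (hδpos z hz)), hSR hz⟩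
  · rintro z ⟨hzW, hzR⟩
    obtain ⟨y, hyS, hyb⟩ := mem_iUnion₂.mp hzW
    exact hδ y hyS ⟨hyb, hzR⟩
end

section
/- Let f : ℝⁿ → ℝ be a continuous function. If f has no local extremum points (no local minimizers and no local maximizers), then f is an open map. -/
/-- A continuous function `f : ℝⁿ → ℝ` with no local minimizers and no local
maximizers is an open map. -/
theorem stmt2 {n : ℕ} (f : EuclideanSpace ℝ (Fin n) → ℝ) (hf : Continuous f)
    (hmin : ∀ x, ¬ ∃ r > (0:ℝ), ∀ y ∈ Metric.closedBall x r, f x ≤ f y)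
    (hmax : ∀ x, ¬ ∃ r > (0:ℝ), ∀ y ∈ Metric.closedBall x r, f y ≤ f x) :
    IsOpenMap f := by
  intro U hU
  rw [isOpen_iff_mem_nhds]
  rintro b ⟨x, hxU, rfl⟩
  obtain ⟨r, hr, hball⟩ := Metric.nhds_basis_closedBall.mem_iff.mp (hU.mem_nhds hxU)
  push_neg at hmin hmax
  obtain ⟨y, hy, hfy⟩ := hmin x r hr
  obtain ⟨z, hz, hfz⟩ := hmax x r hr
  have hconn : IsPreconnected (f '' Metric.closedBall x r) :=
    ((convex_closedBall x r).isPreconnected).image f (hf.continuousOn)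
  have hord := hconn.ordConnected
  have hsub : Set.Ioo (f y) (f z) ⊆ f '' Metric.closedBall x r := by
    intro t ht
    exact hord.out ⟨y, hy, rfl⟩ ⟨z, hz, rfl⟩ ⟨ht.1.le, ht.2.le⟩
  have : Set.Ioo (f y) (f z) ⊆ f '' U :=
    hsub.trans (Set.image_mono (f := f) hball)
  exact Filter.mem_of_superset (Ioo_mem_nhds hfy hfz) this
end

section
/- Let F : ℝⁿ ⇉ ℝᵐ be a set-valued map with closed graph. Suppose F⁻¹ is lower pseudo-H\"older continuous: for each y* ∈ range F and each compact K ⊆ ℝⁿ there exist ε > 0, c > 0, α > 0 such that F⁻¹(y*) ∩ K ⊆ F⁻¹(y) + c‖y − y*‖^α · B̄ for all y ∈ B̄_ε(y*) ∩ range F. Then F is an open map from dom F into range F. -/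
/-- If `F⁻¹` is lower pseudo-Hölder continuous, then the closed-graph set-valued
map `F` is an open map from its domain into its range. -/
theorem stmt6 {n m : ℕ}
    (F : EuclideanSpace ℝ (Fin n) → Set (EuclideanSpace ℝ (Fin m)))
    (hgraph : IsClosed {p : EuclideanSpace ℝ (Fin n) × EuclideanSpace ℝ (Fin m) | p.2 ∈ F p.1})
    (hlph : ∀ ystar ∈ ⋃ x, F x, ∀ K : Set (EuclideanSpace ℝ (Fin n)), IsCompact K →
      ∃ ε > (0:ℝ), ∃ c > (0:ℝ), ∃ α > (0:ℝ),
        ∀ y ∈ Metric.closedBall ystar ε ∩ ⋃ x, F x,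
          ∀ x ∈ {x' | ystar ∈ F x'} ∩ K,
            ∃ a ∈ {x' | y ∈ F x'}, ‖x - a‖ ≤ c * ‖y - ystar‖ ^ α) :
    ∀ U : Set (EuclideanSpace ℝ (Fin n)), IsOpen U →
      ∃ W : Set (EuclideanSpace ℝ (Fin m)), IsOpen W ∧
        (⋃ x ∈ U ∩ {x | (F x).Nonempty}, F x) = W ∩ ⋃ x, F x := by
  intro U hU
  set S : Set (EuclideanSpace ℝ (Fin m)) := ⋃ x ∈ U ∩ {x | (F x).Nonempty}, F x with hS
  have key : ∀ y ∈ S, ∃ δ > (0:ℝ), Metric.ball y δ ∩ (⋃ x, F x) ⊆ S := by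
    intro y hy
    simp only [hS, Set.mem_iUnion, Set.mem_inter_iff, Set.mem_setOf_eq, exists_prop] at hy
    obtain ⟨x, ⟨hxU, _⟩, hyFx⟩ := hy
    have hyrange : y ∈ ⋃ x, F x := Set.mem_iUnion.2 ⟨x, hyFx⟩
    obtain ⟨r, hr, hball⟩ := Metric.isOpen_iff.1 hU x hxU
    obtain ⟨ε, hε, c, hc, α, hα, H⟩ :=
      hlph y hyrange (Metric.closedBall x (r / 2)) (isCompact_closedBall _ _)
    refine ⟨min ε ((r / 2 / c) ^ α⁻¹), lt_min hε (Real.rpow_pos_of_pos (by positivity) _), ?_⟩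
    rintro z ⟨hz1, hz2⟩
    have hd : dist z y < min ε ((r / 2 / c) ^ α⁻¹) := hz1
    obtain ⟨a, haF, hdist⟩ := H z
      ⟨Metric.mem_closedBall.2 (le_of_lt (lt_of_lt_of_le hd (min_le_left _ _))), hz2⟩
      x ⟨hyFx, Metric.mem_closedBall_self (by positivity)⟩
    have hnorm : ‖z - y‖ ≤ (r / 2 / c) ^ α⁻¹ := by
      rw [← dist_eq_norm]
      exact le_of_lt (lt_of_lt_of_le hd (min_le_right _ _))
    have h2 : ‖z - y‖ ^ α ≤ r / 2 / c := by
      calc ‖z - y‖ ^ α ≤ ((r / 2 / c) ^ α⁻¹) ^ α :=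
            Real.rpow_le_rpow (norm_nonneg _) hnorm hα.le
        _ = r / 2 / c := Real.rpow_inv_rpow (by positivity) (ne_of_gt hα)
    have h3 : ‖x - a‖ ≤ r / 2 := by
      calc ‖x - a‖ ≤ c * ‖z - y‖ ^ α := hdist
        _ ≤ c * (r / 2 / c) := by nlinarith
        _ = r / 2 := by field_simp
    have haU : a ∈ U := by
      apply hball
      rw [Metric.mem_ball, dist_eq_norm, norm_sub_rev]
      linarith
    simp only [hS, Set.mem_iUnion, Set.mem_inter_iff, Set.mem_setOf_eq, exists_prop]
    exact ⟨a, ⟨haU, ⟨z, haF⟩⟩, haF⟩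
  choose! δ hδpos hδ using key
  refine ⟨⋃ y ∈ S, Metric.ball y (δ y), isOpen_biUnion fun y _ => Metric.isOpen_ball, ?_⟩
  apply Set.Subset.antisymm
  · intro z hz
    refine ⟨Set.mem_biUnion hz (Metric.mem_ball_self (hδpos z hz)), ?_⟩
    simp only [hS, Set.mem_iUnion, exists_prop] at hz ⊢
    obtain ⟨x, _, hzFx⟩ := hz
    exact ⟨x, hzFx⟩
  · rintro z ⟨hzW, hzR⟩
    obtain ⟨y, hyS, hzy⟩ := Set.mem_iUnion₂.1 hzW
    exact hδ y hyS ⟨hzy, hzR⟩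
end

section
/- Let F : ℝⁿ ⇉ ℝᵐ be a set-valued map with closed graph. Suppose F⁻¹ is lower pseudo-H\"older continuous: for each y* ∈ range F and each compact K ⊆ ℝⁿ there exist ε > 0, c > 0, α > 0 such that F⁻¹(y*) ∩ K ⊆ F⁻¹(y) + c‖y − y*‖^α · B̄ for all y ∈ B̄_ε(y*) ∩ range F. Then range F is locally closed in ℝᵐ. -/
/-- If `F⁻¹` is lower pseudo-Hölder continuous, then `range F` is locally
closed in `ℝᵐ`. -/
theorem stmt7 {n m : ℕ}
    (F : EuclideanSpace ℝ (Fin n) → Set (EuclideanSpace ℝ (Fin m)))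
    (hgraph : IsClosed {p : EuclideanSpace ℝ (Fin n) × EuclideanSpace ℝ (Fin m) | p.2 ∈ F p.1})
    (hlph : ∀ ystar ∈ ⋃ x, F x, ∀ K : Set (EuclideanSpace ℝ (Fin n)), IsCompact K →
      ∃ ε > (0:ℝ), ∃ c > (0:ℝ), ∃ α > (0:ℝ),
        ∀ y ∈ Metric.closedBall ystar ε ∩ ⋃ x, F x,
          ∀ x ∈ {x' | ystar ∈ F x'} ∩ K,
            ∃ a ∈ {x' | y ∈ F x'}, ‖x - a‖ ≤ c * ‖y - ystar‖ ^ α) :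
    ∀ y ∈ ⋃ x, F x, ∃ ε > (0:ℝ), IsClosed (Metric.closedBall y ε ∩ ⋃ x, F x) := by
  intro ystar hy
  obtain ⟨s, hs⟩ := Set.mem_iUnion.mp hy
  obtain ⟨ε, hε, c, hc, α, hα, H⟩ := hlph ystar hy {s} isCompact_singleton
  refine ⟨ε, hε, ?_⟩
  rw [← isSeqClosed_iff_isClosed]
  intro u p hu hup
  have hpball : p ∈ Metric.closedBall ystar ε :=
    Metric.isClosed_closedBall.mem_of_tendsto hup (Filter.Eventually.of_forall fun n => (hu n).1)
  refine ⟨hpball, ?_⟩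
  choose a ha hna using fun k => H (u k) (hu k) s ⟨hs, rfl⟩
  have hbound : ∀ k, a k ∈ Metric.closedBall s (c * ε ^ α) := by
    intro k
    rw [Metric.mem_closedBall, dist_comm, dist_eq_norm]
    calc ‖s - a k‖ ≤ c * ‖u k - ystar‖ ^ α := hna k
    _ ≤ c * ε ^ α := by
        refine mul_le_mul_of_nonneg_left ?_ hc.le
        exact Real.rpow_le_rpow (norm_nonneg _)
          (by rw [← dist_eq_norm]; exact (hu k).1) hα.le
  obtain ⟨b, -, φ, hφ, hab⟩ := (isCompact_closedBall s (c * ε ^ α)).tendsto_subseq hbound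
  have htend : Filter.Tendsto (fun k => (a (φ k), u (φ k))) Filter.atTop (nhds (b, p)) :=
    hab.prodMk_nhds (hup.comp hφ.tendsto_atTop)
  have hbp : p ∈ F b :=
    hgraph.mem_of_tendsto htend (Filter.Eventually.of_forall fun k => ha (φ k))
  exact Set.mem_iUnion.mpr ⟨b, hbp⟩
end

section
/- Let C ⊆ ℝⁿ be a nonempty closed convex set, f : ℝⁿ → ℝⁿ continuous, 𝓢 the solution map of the variational inequality and 𝓕 the associated normal map. If 𝓢 is lower semicontinuous on its domain, then 𝓕 is an open map from ℝⁿ into range 𝓕, i.e., for every open U ⊆ ℝⁿ, 𝓕(U) is open in range 𝓕 with the subspace topology. -/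
open RealInnerProductSpace

/-- If the solution map `𝓢` of the variational inequality is lower
semicontinuous on its domain, then the normal map `𝓕` is an open map from `ℝⁿ` into
`range 𝓕`. -/
theorem stmt16 {n : ℕ} (C : Set (EuclideanSpace ℝ (Fin n)))
    (hCne : C.Nonempty) (hCcl : IsClosed C) (hCcv : Convex ℝ C)
    (f : EuclideanSpace ℝ (Fin n) → EuclideanSpace ℝ (Fin n)) (hf : Continuous f)
    (proj : EuclideanSpace ℝ (Fin n) → EuclideanSpace ℝ (Fin n))
    (hproj : ∀ u, proj u ∈ C ∧ ∀ x' ∈ C, ⟪u - proj u, x' - proj u⟫ ≤ 0)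
    (S : EuclideanSpace ℝ (Fin n) → Set (EuclideanSpace ℝ (Fin n)))
    (hS : ∀ p, S p = {x | x ∈ C ∧ ∀ x' ∈ C, 0 ≤ ⟪p + f x, x' - x⟫})
    (Fn : EuclideanSpace ℝ (Fin n) → EuclideanSpace ℝ (Fin n))
    (hFn : ∀ u, Fn u = f (proj u) + u - proj u)
    (hlsc : ∀ p, ∀ x ∈ S p, ∀ pk : ℕ → EuclideanSpace ℝ (Fin n),
      (∀ k, (S (pk k)).Nonempty) → Filter.Tendsto pk Filter.atTop (nhds p) →
      ∃ xk : ℕ → EuclideanSpace ℝ (Fin n),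
        (∀ k, xk k ∈ S (pk k)) ∧ Filter.Tendsto xk Filter.atTop (nhds x)) :
    ∀ U : Set (EuclideanSpace ℝ (Fin n)), IsOpen U →
      ∃ W : Set (EuclideanSpace ℝ (Fin n)), IsOpen W ∧ Fn '' U = W ∩ Set.range Fn := by
  intro U hU
  -- uniqueness of the projection
  have huniq : ∀ u x, x ∈ C → (∀ x' ∈ C, ⟪u - x, x' - x⟫ ≤ 0) → proj u = x := by
    intro u x hx hchar
    have h1 : ⟪u - proj u, x - proj u⟫ ≤ 0 := (hproj u).2 x hx
    have h2 : ⟪u - x, proj u - x⟫ ≤ 0 := hchar (proj u) (hproj u).1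
    have key : ⟪x - proj u, x - proj u⟫ =
        ⟪u - proj u, x - proj u⟫ + ⟪u - x, proj u - x⟫ := by
      have : ⟪u - x, proj u - x⟫ = - ⟪u - x, x - proj u⟫ := by
        rw [← inner_neg_right]; congr 1; abel
      rw [this, ← sub_eq_add_neg, ← inner_sub_left]
      congr 1; abel
    have hle : ⟪x - proj u, x - proj u⟫ ≤ 0 := key ▸ add_nonpos h1 h2
    have hz : x - proj u = 0 := by
      have := real_inner_self_nonneg (x := x - proj u)
      have : ⟪x - proj u, x - proj u⟫ = 0 := le_antisymm hle this
      exact inner_self_eq_zero.mp this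
    have : x = proj u := by rwa [sub_eq_zero] at hz
    exact this.symm
  -- if x ∈ S (-(q)) then u := x + q - f x satisfies proj u = x and Fn u = q
  have hmem : ∀ q x, x ∈ S (-q) → proj (x + q - f x) = x ∧ Fn (x + q - f x) = q := by
    intro q x hxS
    rw [hS] at hxS
    obtain ⟨hxC, hxV⟩ := hxS
    have hp : proj (x + q - f x) = x := by
      apply huniq _ _ hxC
      intro x' hx'
      have := hxV x' hx'
      have h2 : (x + q - f x) - x = -(-q + f x) := by abel
      rw [h2, inner_neg_left]
      linarith
    refine ⟨hp, ?_⟩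
    rw [hFn, hp]; abel
  -- conversely Fn u = q gives proj u ∈ S (-q)
  have hsol : ∀ u, proj u ∈ S (-(Fn u)) := by
    intro u
    rw [hS]
    refine ⟨(hproj u).1, fun x' hx' => ?_⟩
    have h1 := (hproj u).2 x' hx'
    have h2 : -(Fn u) + f (proj u) = -(u - proj u) := by rw [hFn]; abel
    rw [h2, inner_neg_left]
    linarith
  -- pointwise relative openness of the image
  have hpt : ∀ q ∈ Fn '' U, ∃ ε > 0, Metric.ball q ε ∩ Set.range Fn ⊆ Fn '' U := by
    rintro q ⟨u, huU, rfl⟩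
    by_contra hcon
    push_neg at hcon
    have hseq : ∀ k : ℕ, ∃ qk, qk ∈ Metric.ball (Fn u) (1 / (k + 1 : ℝ)) ∩ Set.range Fn ∧
        qk ∉ Fn '' U := by
      intro k
      have hpos : (0 : ℝ) < 1 / (k + 1 : ℝ) := by positivity
      obtain ⟨qk, hqk1, hqk2⟩ := Set.not_subset.mp (hcon _ hpos)
      exact ⟨qk, hqk1, hqk2⟩
    choose qk hqk hqknot using hseq
    have hqtend : Filter.Tendsto qk Filter.atTop (nhds (Fn u)) := by
      rw [tendsto_iff_dist_tendsto_zero]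
      have hb : ∀ k, dist (qk k) (Fn u) ≤ 1 / (k + 1 : ℝ) := fun k =>
        le_of_lt (Metric.mem_ball.mp (hqk k).1)
      have h0 : ∀ k, (0:ℝ) ≤ dist (qk k) (Fn u) := fun k => dist_nonneg
      refine squeeze_zero h0 hb ?_
      exact tendsto_one_div_add_atTop_nhds_zero_nat
    have hptend : Filter.Tendsto (fun k => -(qk k)) Filter.atTop (nhds (-(Fn u))) :=
      hqtend.neg
    have hSne : ∀ k, (S (-(qk k))).Nonempty := by
      intro k
      obtain ⟨v, hv⟩ := (hqk k).2
      exact ⟨proj v, hv ▸ hsol v⟩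
    obtain ⟨xk, hxk, hxktend⟩ := hlsc (-(Fn u)) (proj u) (hsol u) (fun k => -(qk k)) hSne hptend
    -- uk := xk k + qk k - f (xk k)
    set uk : ℕ → EuclideanSpace ℝ (Fin n) := fun k => xk k + qk k - f (xk k) with huk
    have hFnuk : ∀ k, Fn (uk k) = qk k := fun k => (hmem (qk k) (xk k) (hxk k)).2
    have huktend : Filter.Tendsto uk Filter.atTop (nhds (proj u + Fn u - f (proj u))) := by
      exact ((hxktend.add hqtend).sub ((hf.tendsto _).comp hxktend))
    have hlim : proj u + Fn u - f (proj u) = u := by rw [hFn]; abel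
    rw [hlim] at huktend
    have hev : ∀ᶠ k in Filter.atTop, uk k ∈ U := huktend.eventually (hU.mem_nhds huU)
    obtain ⟨k, hk⟩ := hev.exists
    exact hqknot k ⟨uk k, hk, hFnuk k⟩
  choose ε hεpos hεsub using hpt
  refine ⟨⋃ (q) (h : q ∈ Fn '' U), Metric.ball q (ε q h), ?_, ?_⟩
  · exact isOpen_iUnion fun q => isOpen_iUnion fun h => Metric.isOpen_ball
  · ext y
    constructor
    · rintro hy
      refine ⟨Set.mem_iUnion.mpr ⟨y, Set.mem_iUnion.mpr ⟨hy, ?_⟩⟩, ?_⟩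
      · exact Metric.mem_ball_self (hεpos y hy)
      · obtain ⟨v, _, hv⟩ := hy; exact ⟨v, hv⟩
    · rintro ⟨hyW, hyR⟩
      obtain ⟨q, hq⟩ := Set.mem_iUnion.mp hyW
      obtain ⟨hqU, hyb⟩ := Set.mem_iUnion.mp hq
      exact hεsub q hqU ⟨hyb, hyR⟩
end

section
/- Let F : ℝⁿ ⇉ ℝᵐ be a set-valued map with closed graph, and suppose F is H\"older metrically regular. Then for every y* ∈ range F, the set B̄_ε(y*) ∩ range F is closed in ℝᵐ for some ε > 0; in particular, range F is locally closed. -/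
/-- If a closed-graph set-valued map `F` is Hölder metrically regular, then for
every `y* ∈ range F` some closed-ball neighbourhood meets `range F` in a closed set; in
particular `range F` is locally closed. -/
theorem stmt17 {n m : ℕ}
    (F : EuclideanSpace ℝ (Fin n) → Set (EuclideanSpace ℝ (Fin m)))
    (hgraph : IsClosed {p : EuclideanSpace ℝ (Fin n) × EuclideanSpace ℝ (Fin m) | p.2 ∈ F p.1})
    (hreg : ∀ ystar ∈ ⋃ x, F x, ∀ K : Set (EuclideanSpace ℝ (Fin n)), IsCompact K →
      ∃ ε > (0:ℝ), ∃ c > (0:ℝ), ∃ α > (0:ℝ),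
        ∀ x ∈ K ∩ {x | (F x).Nonempty}, ∀ y ∈ Metric.closedBall ystar ε ∩ ⋃ x, F x,
          Metric.infDist x {x' | y ∈ F x'} ≤ c * Metric.infDist y (F x) ^ α) :
    ∀ ystar ∈ ⋃ x, F x, ∃ ε > (0:ℝ),
      IsClosed (Metric.closedBall ystar ε ∩ ⋃ x, F x) := by
  intro ystar hy
  obtain ⟨ε, hε, c, hc, α, hα, hest⟩ := hreg ystar hy {Classical.choose (Set.mem_iUnion.1 hy)}
    isCompact_singleton
  set xstar := Classical.choose (Set.mem_iUnion.1 hy) with hxstar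
  have hyF : ystar ∈ F xstar := Classical.choose_spec (Set.mem_iUnion.1 hy)
  refine ⟨ε, hε, ?_⟩
  set R : ℝ := c * ε ^ α with hR
  have key : Metric.closedBall ystar ε ∩ ⋃ x, F x =
      Prod.snd '' ({p : EuclideanSpace ℝ (Fin n) × EuclideanSpace ℝ (Fin m) | p.2 ∈ F p.1} ∩
        Metric.closedBall xstar (R + 1) ×ˢ Metric.closedBall ystar ε) := by
    apply Set.Subset.antisymm
    · rintro y ⟨hyb, hyr⟩
      have hne : {x' | y ∈ F x'}.Nonempty := by
        obtain ⟨x₀, hx₀⟩ := Set.mem_iUnion.1 hyr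
        exact ⟨x₀, hx₀⟩
      have h1 : Metric.infDist xstar {x' | y ∈ F x'} ≤ R := by
        have := hest xstar ⟨rfl, ⟨ystar, hyF⟩⟩ y ⟨hyb, hyr⟩
        refine this.trans ?_
        have h2 : Metric.infDist y (F xstar) ≤ ε :=
          (Metric.infDist_le_dist_of_mem hyF).trans (Metric.mem_closedBall.1 hyb)
        have h3 : Metric.infDist y (F xstar) ^ α ≤ ε ^ α :=
          Real.rpow_le_rpow Metric.infDist_nonneg h2 hα.le
        exact mul_le_mul_of_nonneg_left h3 hc.le
      have h4 : Metric.infDist xstar {x' | y ∈ F x'} < R + 1 := lt_of_le_of_lt h1 (by linarith)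
      obtain ⟨x', hx', hd⟩ := (Metric.infDist_lt_iff hne).1 h4
      exact ⟨(x', y), ⟨hx', Metric.mem_closedBall'.1 hd.le, hyb⟩, rfl⟩
    · rintro y ⟨⟨x', y'⟩, ⟨hg, _, hb⟩, rfl⟩
      exact ⟨hb, Set.mem_iUnion.2 ⟨x', hg⟩⟩
  rw [key]
  have hcomp : IsCompact ({p : EuclideanSpace ℝ (Fin n) × EuclideanSpace ℝ (Fin m) | p.2 ∈ F p.1} ∩
      Metric.closedBall xstar (R + 1) ×ˢ Metric.closedBall ystar ε) :=
    ((isCompact_closedBall _ _).prod (isCompact_closedBall _ _)).inter_left hgraph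
  exact (hcomp.image continuous_snd).isClosed
end
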